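/- Let {X_n : n ∈ ℕ} be a sequence of k_ω-spaces with X_n a closed subspace of X_{n+1} for every n. Then the colimit X = colim_n X_n is a k_ω-space. -/

import Mathlib

open Set Topology

def IsKOmegaStructure {X : Type*} [TopologicalSpace X] (K : ℕ → Set X) : Prop :=
  (∀ n, IsCompact (K n)) ∧ (⋃ n, K n) = Set.univ ∧
    ∀ F : Set X, IsClosed F ↔ ∀ n, IsClosed (((↑) : K n → X) ⁻¹' F)

def IsCompactCoverMap {X Y : Type*} [TopologicalSpace X] [TopologicalSpace Y]
    (f : X → Y) : Prop :=
  Continuous f ∧ Function.Surjective f ∧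
    ∀ C : Set Y, IsCompact C → ∃ K : Set X, IsCompact K ∧ f '' K = C

section Aux

variable {Y : Type*} [TopologicalSpace Y]

/-- In a normal space, disjoint closed sets can be separated by open sets with
disjoint closures. -/
lemma aux_normal_sep [NormalSpace Y] {s t : Set Y} (hs : IsClosed s) (ht : IsClosed t)
    (h : Disjoint s t) :
    ∃ u v : Set Y, IsOpen u ∧ IsOpen v ∧ s ⊆ u ∧ t ⊆ v ∧
      Disjoint (closure u) (closure v) := by
  obtain ⟨u, hu, hsu, huc⟩ := normal_exists_closure_subset hs ht.isOpen_compl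
    h.subset_compl_right
  obtain ⟨v, hv, htv, hvc⟩ := normal_exists_closure_subset ht
    isClosed_closure.isOpen_compl (Set.subset_compl_comm.mp huc)
  exact ⟨u, v, hu, hv, hsu, htv,
    Set.disjoint_left.mpr fun {a} ha hav => hvc hav ha⟩

/-- One step of the inductive separation construction: separate two disjoint closed
subsets of a closed set `s` (whose subspace is normal) by relatively open sets
contained in disjoint closed sets. -/
lemma aux_step {s : Set Y} (hs : IsClosed s) (hnorm : NormalSpace s)
    {C D : Set Y} (hC : IsClosed C) (hD : IsClosed D) (hCD : Disjoint C D)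
    (hCs : C ⊆ s) (hDs : D ⊆ s) :
    ∃ U C' V D' : Set Y,
      (∃ O, IsOpen O ∧ U = s ∩ O) ∧ IsClosed C' ∧ C ⊆ U ∧ U ⊆ C' ∧ C' ⊆ s ∧
      (∃ O, IsOpen O ∧ V = s ∩ O) ∧ IsClosed D' ∧ D ⊆ V ∧ V ⊆ D' ∧ D' ⊆ s ∧
      Disjoint C' D' := by
  haveI := hnorm
  have hc : IsClosed (((↑) : s → Y) ⁻¹' C) := hC.preimage continuous_subtype_val
  have hd : IsClosed (((↑) : s → Y) ⁻¹' D) := hD.preimage continuous_subtype_val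
  have hcd : Disjoint (((↑) : s → Y) ⁻¹' C) (((↑) : s → Y) ⁻¹' D) := hCD.preimage _
  obtain ⟨u, v, hu, hv, hcu, hdv, huv⟩ := aux_normal_sep hc hd hcd
  obtain ⟨O, hO, hOu⟩ := isOpen_induced_iff.mp hu
  obtain ⟨O', hO', hO'v⟩ := isOpen_induced_iff.mp hv
  have himsub : ∀ w : Set s, Subtype.val '' w ⊆ s := by
    rintro w x ⟨y, _, rfl⟩; exact y.2
  refine ⟨Subtype.val '' u, Subtype.val '' (closure u),
          Subtype.val '' v, Subtype.val '' (closure v),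
    ⟨O, hO, by rw [← hOu, Subtype.image_preimage_coe]⟩,
    hs.isClosedEmbedding_subtypeVal.isClosedMap _ isClosed_closure,
    ?_, Set.image_mono subset_closure, himsub _,
    ⟨O', hO', by rw [← hO'v, Subtype.image_preimage_coe]⟩,
    hs.isClosedEmbedding_subtypeVal.isClosedMap _ isClosed_closure,
    ?_, Set.image_mono subset_closure, himsub _,
    (Set.disjoint_image_iff Subtype.val_injective).mpr huv⟩
  · intro x hx
    exact ⟨⟨x, hCs hx⟩, hcu hx, rfl⟩
  · intro x hx
    exact ⟨⟨x, hDs hx⟩, hdv hx, rfl⟩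

/-- The core separation lemma for colimits of chains of closed normal subspaces. -/
lemma aux_chain_sep (L : ℕ → Set Y) (hLmono : Monotone L)
    (hLclosed : ∀ n, IsClosed (L n)) (hLnorm : ∀ n, NormalSpace (L n))
    (hLcover : (⋃ n, L n) = Set.univ)
    (hLcrit : ∀ F : Set Y, (∀ n, IsClosed (((↑) : L n → Y) ⁻¹' F)) → IsClosed F)
    {F G : Set Y} (hF : IsClosed F) (hG : IsClosed G) (hFG : Disjoint F G) :
    ∃ U V : Set Y, IsOpen U ∧ IsOpen V ∧ F ⊆ U ∧ G ⊆ V ∧ Disjoint U V := by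
  classical
  set Inv : ℕ → (Set Y × Set Y) × Set Y × Set Y → Prop := fun n p =>
    (∃ O, IsOpen O ∧ p.1.1 = L n ∩ O) ∧ IsClosed p.1.2 ∧ F ∩ L n ⊆ p.1.1 ∧
      p.1.1 ⊆ p.1.2 ∧ p.1.2 ⊆ L n ∧ Disjoint p.1.2 G ∧
    (∃ O, IsOpen O ∧ p.2.1 = L n ∩ O) ∧ IsClosed p.2.2 ∧ G ∩ L n ⊆ p.2.1 ∧
      p.2.1 ⊆ p.2.2 ∧ p.2.2 ⊆ L n ∧ Disjoint p.2.2 F ∧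
    Disjoint p.1.2 p.2.2 with hInvDef
  -- the inductive step
  have step : ∀ n (p : (Set Y × Set Y) × Set Y × Set Y), Inv n p →
      ∃ q, Inv (n + 1) q ∧ p.1.2 ⊆ q.1.1 ∧ p.2.2 ⊆ q.2.1 := by
    rintro n ⟨⟨U, C⟩, V, D⟩
      ⟨-, hC, -, hUC, hCL, hCG, -, hD, -, hVD, hDL, hDF, hCD⟩
    have hFL : IsClosed (F ∩ L (n + 1)) := hF.inter (hLclosed (n + 1))
    have hGL : IsClosed (G ∩ L (n + 1)) := hG.inter (hLclosed (n + 1))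
    have hdisj : Disjoint (C ∪ F ∩ L (n + 1)) (D ∪ G ∩ L (n + 1)) := by
      rw [Set.disjoint_union_left, Set.disjoint_union_right, Set.disjoint_union_right]
      exact ⟨⟨hCD, hCG.mono_right Set.inter_subset_left⟩,
        ⟨hDF.symm.mono_left Set.inter_subset_left,
          hFG.mono Set.inter_subset_left Set.inter_subset_left⟩⟩
    obtain ⟨U', C', V', D', hrel, hC', hsub1, hsub2, hsub3,
        hrel', hD', hsub4, hsub5, hsub6, hdisj'⟩ :=
      aux_step (hLclosed (n + 1)) (hLnorm (n + 1)) (hC.union hFL) (hD.union hGL) hdisj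
        (Set.union_subset (hCL.trans (hLmono (Nat.le_succ n))) Set.inter_subset_right)
        (Set.union_subset (hDL.trans (hLmono (Nat.le_succ n))) Set.inter_subset_right)
    refine ⟨⟨⟨U', C'⟩, V', D'⟩,
      ⟨hrel, hC', fun x hx => hsub1 (Set.mem_union_right _ hx), hsub2, hsub3, ?_,
       hrel', hD', fun x hx => hsub4 (Set.mem_union_right _ hx), hsub5, hsub6, ?_,
       hdisj'⟩,
      fun x hx => hsub1 (Set.mem_union_left _ hx),
      fun x hx => hsub4 (Set.mem_union_left _ hx)⟩
    · exact Set.disjoint_left.mpr fun {a} ha haG =>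
        Set.disjoint_left.mp hdisj' ha (hsub5 (hsub4 (Set.mem_union_right _ ⟨haG, hsub3 ha⟩)))
    · exact Set.disjoint_left.mpr fun {a} ha haF =>
        Set.disjoint_left.mp hdisj' (hsub2 (hsub1 (Set.mem_union_right _ ⟨haF, hsub6 ha⟩))) ha
  -- base case
  have base : ∃ p, Inv 0 p := by
    obtain ⟨U', C', V', D', hrel, hC', hsub1, hsub2, hsub3,
        hrel', hD', hsub4, hsub5, hsub6, hdisj'⟩ :=
      aux_step (hLclosed 0) (hLnorm 0) (hF.inter (hLclosed 0)) (hG.inter (hLclosed 0))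
        (hFG.mono Set.inter_subset_left Set.inter_subset_left)
        Set.inter_subset_right Set.inter_subset_right
    refine ⟨⟨⟨U', C'⟩, V', D'⟩,
      hrel, hC', hsub1, hsub2, hsub3, ?_, hrel', hD', hsub4, hsub5, hsub6, ?_, hdisj'⟩
    · exact Set.disjoint_left.mpr fun {a} ha haG =>
        Set.disjoint_left.mp hdisj' ha (hsub5 (hsub4 ⟨haG, hsub3 ha⟩))
    · exact Set.disjoint_left.mpr fun {a} ha haF =>
        Set.disjoint_left.mp hdisj' (hsub2 (hsub1 ⟨haF, hsub6 ha⟩)) ha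
  obtain ⟨p0, hp0⟩ := base
  choose! f hf hf1 hf2 using step
  set q : ℕ → (Set Y × Set Y) × Set Y × Set Y := fun n => Nat.rec p0 f n with hq
  have hInv : ∀ n, Inv n (q n) := by
    intro n
    induction n with
    | zero => exact hp0
    | succ n ih => exact hf n (q n) ih
  have hlink1 : ∀ n, (q n).1.2 ⊆ (q (n + 1)).1.1 := fun n => hf1 n (q n) (hInv n)
  have hlink2 : ∀ n, (q n).2.2 ⊆ (q (n + 1)).2.1 := fun n => hf2 n (q n) (hInv n)
  have hUmono : Monotone fun n => (q n).1.1 :=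
    monotone_nat_of_le_succ fun n => ((hInv n).2.2.2.1).trans (hlink1 n)
  have hVmono : Monotone fun n => (q n).2.1 :=
    monotone_nat_of_le_succ fun n => ((hInv n).2.2.2.2.2.2.2.2.2.1).trans (hlink2 n)
  refine ⟨⋃ n, (q n).1.1, ⋃ n, (q n).2.1, ?_, ?_, ?_, ?_, ?_⟩
  · -- openness of U
    rw [← isClosed_compl_iff]
    apply hLcrit
    intro n
    rw [Set.preimage_compl, ← isOpen_compl_iff, compl_compl]
    have hUeq : (⋃ m, (q m).1.1) = ⋃ m, (q (n + m)).1.1 := by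
      apply Set.Subset.antisymm
      · exact Set.iUnion_subset fun m =>
          (hUmono (Nat.le_add_left m n)).trans
            (Set.subset_iUnion (fun k => (q (n + k)).1.1) m)
      · exact Set.iUnion_subset fun m => Set.subset_iUnion (fun k => (q k).1.1) (n + m)
    rw [hUeq, Set.preimage_iUnion]
    apply isOpen_iUnion
    intro m
    obtain ⟨O, hO, hUO⟩ := (hInv (n + m)).1
    have : (((↑) : L n → Y) ⁻¹' (q (n + m)).1.1) = ((↑) : L n → Y) ⁻¹' O := by
      rw [hUO]
      ext x
      simp [hLmono (Nat.le_add_right n m) x.2]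
    rw [this]
    exact hO.preimage continuous_subtype_val
  · -- openness of V
    rw [← isClosed_compl_iff]
    apply hLcrit
    intro n
    rw [Set.preimage_compl, ← isOpen_compl_iff, compl_compl]
    have hVeq : (⋃ m, (q m).2.1) = ⋃ m, (q (n + m)).2.1 := by
      apply Set.Subset.antisymm
      · exact Set.iUnion_subset fun m =>
          (hVmono (Nat.le_add_left m n)).trans
            (Set.subset_iUnion (fun k => (q (n + k)).2.1) m)
      · exact Set.iUnion_subset fun m => Set.subset_iUnion (fun k => (q k).2.1) (n + m)
    rw [hVeq, Set.preimage_iUnion]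
    apply isOpen_iUnion
    intro m
    obtain ⟨O, hO, hVO⟩ := (hInv (n + m)).2.2.2.2.2.2.1
    have : (((↑) : L n → Y) ⁻¹' (q (n + m)).2.1) = ((↑) : L n → Y) ⁻¹' O := by
      rw [hVO]
      ext x
      simp [hLmono (Nat.le_add_right n m) x.2]
    rw [this]
    exact hO.preimage continuous_subtype_val
  · -- F ⊆ U
    intro x hx
    have : x ∈ ⋃ n, L n := by rw [hLcover]; trivial
    obtain ⟨n, hn⟩ := Set.mem_iUnion.mp this
    exact Set.mem_iUnion.mpr ⟨n, (hInv n).2.2.1 ⟨hx, hn⟩⟩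
  · -- G ⊆ V
    intro x hx
    have : x ∈ ⋃ n, L n := by rw [hLcover]; trivial
    obtain ⟨n, hn⟩ := Set.mem_iUnion.mp this
    exact Set.mem_iUnion.mpr ⟨n, (hInv n).2.2.2.2.2.2.2.2.1 ⟨hx, hn⟩⟩
  · -- disjointness
    rw [Set.disjoint_iUnion_left]
    intro n
    rw [Set.disjoint_iUnion_right]
    intro m
    have h1 : (q n).1.1 ⊆ (q (max n m)).1.2 :=
      (hUmono (le_max_left n m)).trans (hInv (max n m)).2.2.2.1
    have h2 : (q m).2.1 ⊆ (q (max n m)).2.2 :=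
      (hVmono (le_max_right n m)).trans (hInv (max n m)).2.2.2.2.2.2.2.2.2.1
    exact ((hInv (max n m)).2.2.2.2.2.2.2.2.2.2.2.2).mono h1 h2

/-- For a compact subset `t` of a Hausdorff space, the preimage of `F` in `t` is closed
iff `F ∩ t` is compact. -/
lemma aux_closed_iff_compact [T2Space Y] {t : Set Y} (ht : IsCompact t) (F : Set Y) :
    IsClosed (((↑) : t → Y) ⁻¹' F) ↔ IsCompact (F ∩ t) := by
  haveI := isCompact_iff_compactSpace.mp ht
  constructor
  · intro h
    have := h.isCompact.image continuous_subtype_val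
    rwa [Subtype.image_preimage_coe, Set.inter_comm] at this
  · intro h
    rw [← Subtype.preimage_coe_inter_self]
    exact h.isClosed.preimage continuous_subtype_val

/-- In a Hausdorff `k_ω`-space, a set is closed iff its intersection with each of the
accumulated compact sets is compact. -/
lemma aux_komega_closed_iff [T2Space Y] {K : ℕ → Set Y} (hK : IsKOmegaStructure K)
    (F : Set Y) : IsClosed F ↔ ∀ n, IsCompact (F ∩ Set.accumulate K n) := by
  constructor
  · exact fun hF n => (isCompact_accumulate hK.1 n).inter_left hF
  · intro h
    rw [hK.2.2]
    intro n
    have h1 : IsCompact (F ∩ K n) := by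
      have heq : F ∩ K n = (F ∩ Set.accumulate K n) ∩ K n := by
        rw [Set.inter_assoc, Set.inter_eq_self_of_subset_right (Set.subset_accumulate)]
      rw [heq]
      exact (h n).inter (hK.1 n)
    rw [← Subtype.preimage_coe_inter_self]
    exact h1.isClosed.preimage continuous_subtype_val

/-- A Hausdorff `k_ω`-space is normal. -/
lemma aux_komega_normal [T2Space Y] {K : ℕ → Set Y} (hK : IsKOmegaStructure K) :
    NormalSpace Y := by
  constructor
  intro s t hs ht hd
  obtain ⟨U, V, hU, hV, hsU, htV, hUV⟩ :=
    aux_chain_sep (fun n => Set.accumulate K n) monotone_accumulate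
      (fun n => (isCompact_accumulate hK.1 n).isClosed)
      (fun n => by
        haveI := isCompact_iff_compactSpace.mp (isCompact_accumulate hK.1 n)
        infer_instance)
      (by rw [Set.iUnion_accumulate, hK.2.1])
      (fun F hF => (aux_komega_closed_iff hK F).mpr fun n =>
        (aux_closed_iff_compact (isCompact_accumulate hK.1 n) F).mp (hF n))
      hs ht hd
  exact ⟨U, V, hU, hV, hsU, htV, hUV⟩

end Aux

theorem stmt10 {X : Type*} [TopologicalSpace X] (A : ℕ → Set X)
    (hmono : ∀ n, A n ⊆ A (n + 1)) (hunion : (⋃ n, A n) = Set.univ)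
    (hclosedsucc : ∀ n, IsClosed (((↑) : A (n + 1) → X) ⁻¹' (A n)))
    (hcolim : ∀ F : Set X, IsClosed F ↔ ∀ n, IsClosed (((↑) : A n → X) ⁻¹' F))
    (hk : ∀ n, T2Space (A n) ∧ ∃ K : ℕ → Set (A n), IsKOmegaStructure K) :
    T2Space X ∧ ∃ K : ℕ → Set X, IsKOmegaStructure K := by
  classical
  have hAmono : Monotone A := monotone_nat_of_le_succ hmono
  -- each A n is closed "in" A m for m ≥ n
  have hnest : ∀ n k, IsClosed (((↑) : A (n + k) → X) ⁻¹' (A n)) := by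
    intro n k
    induction k with
    | zero =>
      have : (((↑) : A (n + 0) → X) ⁻¹' (A n)) = Set.univ :=
        Set.eq_univ_of_forall fun x => x.2
      rw [this]; exact isClosed_univ
    | succ k ih =>
      obtain ⟨C, hC, hCe⟩ := isClosed_induced_iff.mp ih
      have h2 : A n = C ∩ A (n + k) := by
        have h3 := Subtype.preimage_coe_eq_preimage_coe_iff.mp hCe
        rw [Set.inter_eq_right.mpr (hAmono (Nat.le_add_right n k))] at h3
        rw [Set.inter_comm]
        exact h3.symm
      have h4 : (((↑) : A (n + (k + 1)) → X) ⁻¹' (A n)) =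
          ((↑) : A (n + (k + 1)) → X) ⁻¹' C ∩ ((↑) : A (n + (k + 1)) → X) ⁻¹' (A (n + k)) := by
        rw [h2, Set.preimage_inter]
      rw [h4]
      exact (hC.preimage continuous_subtype_val).inter (hclosedsucc (n + k))
  -- each A n is closed in X
  have hAclosed : ∀ n, IsClosed (A n) := by
    intro n
    rw [hcolim]
    intro m
    rcases le_or_gt m n with h | h
    · have : (((↑) : A m → X) ⁻¹' (A n)) = Set.univ :=
        Set.eq_univ_of_forall fun x => hAmono h x.2
      rw [this]; exact isClosed_univ
    · have hnk := hnest n (m - n)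
      rwa [show n + (m - n) = m by omega] at hnk
  -- each subspace A n is normal
  have hnorm : ∀ n, NormalSpace (A n) := by
    intro n
    letI := (hk n).1
    obtain ⟨K, hK⟩ := (hk n).2
    exact aux_komega_normal hK
  -- singletons are closed in X
  have hsingleton : ∀ x : X, IsClosed ({x} : Set X) := by
    intro x
    rw [hcolim]
    intro m
    letI := (hk m).1
    have hsub : (((↑) : A m → X) ⁻¹' {x}).Subsingleton := by
      intro a ha b hb
      apply Subtype.ext
      simp only [Set.mem_preimage, Set.mem_singleton_iff] at ha hb
      rw [ha, hb]
    exact hsub.isClosed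
  -- X is Hausdorff
  haveI hT2X : T2Space X := by
    constructor
    intro x y hxy
    obtain ⟨U, V, hU, hV, hxU, hyV, hUV⟩ :=
      aux_chain_sep A hAmono hAclosed hnorm hunion
        (fun F hF => (hcolim F).mpr hF) (hsingleton x) (hsingleton y)
        (Set.disjoint_singleton.mpr hxy)
    exact ⟨U, V, hU, hV, hxU rfl, hyV rfl, hUV⟩
  refine ⟨hT2X, ?_⟩
  choose Kf hKf using fun n => (hk n).2
  set B : ℕ → Set X := fun k =>
    Subtype.val '' (Kf k.unpair.1 k.unpair.2) with hB
  have hBcomp : ∀ k, IsCompact (B k) :=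
    fun k => (((hKf k.unpair.1).1 k.unpair.2).image continuous_subtype_val)
  have hBpair : ∀ n m, B (Nat.pair n m) = Subtype.val '' (Kf n m) := by
    intro n m
    have h : (Nat.pair n m).unpair = (n, m) := Nat.unpair_pair n m
    calc B (Nat.pair n m)
        = Subtype.val '' (Kf ((Nat.pair n m).unpair).1 ((Nat.pair n m).unpair).2) := rfl
      _ = Subtype.val '' (Kf n m) := by rw [h]
  refine ⟨B, hBcomp, ?_, ?_⟩
  · -- cover
    apply Set.eq_univ_of_forall
    intro x
    have : x ∈ ⋃ n, A n := by rw [hunion]; trivial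
    obtain ⟨n, hn⟩ := Set.mem_iUnion.mp this
    have hx : (⟨x, hn⟩ : A n) ∈ ⋃ m, Kf n m := by rw [(hKf n).2.1]; trivial
    obtain ⟨m, hm⟩ := Set.mem_iUnion.mp hx
    apply Set.mem_iUnion.mpr
    refine ⟨Nat.pair n m, ?_⟩
    rw [hBpair n m]
    exact ⟨⟨x, hn⟩, hm, rfl⟩
  · -- closedness criterion
    intro F
    constructor
    · intro hF k
      exact hF.preimage continuous_subtype_val
    · intro h
      rw [hcolim]
      intro n
      letI := (hk n).1
      rw [(hKf n).2.2]
      intro m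
      rw [aux_closed_iff_compact ((hKf n).1 m)]
      rw [Subtype.isCompact_iff]
      have hkcomp : IsCompact (F ∩ Subtype.val '' (Kf n m)) := by
        have h2 := (aux_closed_iff_compact (hBcomp (Nat.pair n m)) F).mp (h (Nat.pair n m))
        rwa [hBpair n m] at h2
      have heq : Subtype.val '' ((Subtype.val ⁻¹' F : Set (A n)) ∩ Kf n m) =
          F ∩ Subtype.val '' (Kf n m) := by
        rw [Set.image_inter Subtype.val_injective, Subtype.image_preimage_coe]
        ext x
        simp only [Set.mem_inter_iff]
        constructor
        · rintro ⟨⟨-, hF'⟩, hI⟩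
          exact ⟨hF', hI⟩
        · rintro ⟨hF', hI⟩
          have hxA : x ∈ A n := by obtain ⟨y, -, rfl⟩ := hI; exact y.2
          exact ⟨⟨hxA, hF'⟩, hI⟩
      rw [heq]
      exact hkcomp
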